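/- The pair α_n(y) = y^n q^{n(n-1)/2} and β_n(y) = ((-q;q)_n (-y;q)_n / (yq;q)_{2n}) · ∑_{k=0}^n q^{2k} (y/q;q)_{2k} / ((q²;q²)_k (y²;q²)_k) is a Bailey pair relative to y, i.e. β_n(y) = ∑_{k=0}^n α_k(y) / ((q;q)_{n-k} (yq;q)_{n+k}). -/

import Mathlib

noncomputable def qPoch (a q : ℂ) (n : ℕ) : ℂ := ∏ i ∈ Finset.range n, (1 - a * q ^ i)

noncomputable def qPochInf (a q : ℂ) : ℂ := ∏' i : ℕ, (1 - a * q ^ i)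

noncomputable def qBinom (q : ℂ) (m k : ℕ) : ℂ :=
  if k ≤ m then qPoch q q m / (qPoch q q k * qPoch q q (m - k)) else 0

set_option maxHeartbeats 1000000

lemma qPoch_zero (a q : ℂ) : qPoch a q 0 = 1 := Finset.prod_range_zero _

lemma qPoch_succ (a q : ℂ) (j : ℕ) : qPoch a q (j+1) = qPoch a q j * (1 - a * q ^ j) :=
  Finset.prod_range_succ _ _

lemma tri (k : ℕ) : (k+1)*k/2 = k*(k-1)/2 + k := by
  cases k with
  | zero => rfl
  | succ m =>
    have h : (m+1+1)*(m+1) = (m+1)*m + 2*(m+1) := by ring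
    rw [h, Nat.add_mul_div_left _ _ (by norm_num : 0 < 2)]
    simp

lemma qPoch_sq (a q : ℂ) (j : ℕ) :
    qPoch (a^2) (q^2) j = qPoch a q j * qPoch (-a) q j := by
  unfold qPoch
  rw [← Finset.prod_mul_distrib]
  refine Finset.prod_congr rfl fun i _ => ?_
  rw [show ((q^2)^i) = (q^i)^2 by rw [← pow_mul, ← pow_mul, Nat.mul_comm]]
  ring

lemma qPoch_y_succ (y q : ℂ) (j : ℕ) :
    qPoch y q (j+1) = (1 - y) * qPoch (y*q) q j := by
  unfold qPoch
  rw [Finset.prod_range_succ']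
  rw [mul_comm]
  congr 1
  · simp
  · refine Finset.prod_congr rfl fun i _ => ?_
    rw [pow_succ']
    ring

lemma qPoch_yq (y q : ℂ) (hq : q ≠ 0) (j : ℕ) :
    qPoch (y/q) q (j+2) = (1 - y/q) * ((1 - y) * qPoch (y*q) q j) := by
  have h : qPoch (y/q) q (j+1+1) = (1 - y/q) * qPoch ((y/q)*q) q (j+1) := qPoch_y_succ _ _ _
  rw [h, div_mul_cancel₀ _ hq, qPoch_y_succ]

lemma one_sub_pow_ne {q : ℂ} (hq1 : ‖q‖ < 1) (i : ℕ) : 1 - q^(i+1) ≠ 0 := by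
  intro h
  rw [sub_eq_zero] at h
  have h1 : ‖q^(i+1)‖ < 1 := by
    rw [norm_pow]; exact pow_lt_one₀ (norm_nonneg q) hq1 (Nat.succ_ne_zero i)
  rw [← h] at h1
  simp at h1

lemma one_add_pow_ne {q : ℂ} (hq1 : ‖q‖ < 1) (i : ℕ) : 1 + q^(i+1) ≠ 0 := by
  intro h
  have h2 : q^(i+1) = -1 := by linear_combination h
  have h1 : ‖q^(i+1)‖ < 1 := by
    rw [norm_pow]; exact pow_lt_one₀ (norm_nonneg q) hq1 (Nat.succ_ne_zero i)
  rw [h2] at h1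
  simp at h1

lemma one_sub_y_ne {q y : ℂ} (hq : q ≠ 0)
    (hy : ∀ m : ℕ, y ≠ q ^ (-(m : ℤ)) ∧ y ≠ -q ^ (-(m : ℤ))) (i : ℕ) :
    1 - y * q^i ≠ 0 := by
  intro h
  have hqi : q^i ≠ 0 := pow_ne_zero _ hq
  apply (hy i).1
  rw [zpow_neg, zpow_natCast]
  field_simp
  linear_combination -h

lemma one_add_y_ne {q y : ℂ} (hq : q ≠ 0)
    (hy : ∀ m : ℕ, y ≠ q ^ (-(m : ℤ)) ∧ y ≠ -q ^ (-(m : ℤ))) (i : ℕ) :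
    1 + y * q^i ≠ 0 := by
  intro h
  have hqi : q^i ≠ 0 := pow_ne_zero _ hq
  apply (hy i).2
  rw [zpow_neg, zpow_natCast]
  field_simp
  linear_combination h

lemma abstract_tel (q y u x A B w v : ℂ) (hq : q ≠ 0) (hx0 : x ≠ 0)
    (ha : A ≠ 0) (hb : B ≠ 0)
    (h1 : 1 - q*u ≠ 0) (h2 : 1 - y*q*(u*x*x) ≠ 0)
    (h3 : 1 - y*(u*x*(u*x)*q) ≠ 0) (h4 : 1 - y*(u*x*(u*x)*q^2) ≠ 0)
    (h5 : 1 - y*(u*x*x*q) ≠ 0) (h6 : 1 - y*(u*x*x*q^2) ≠ 0) :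
    w * v / (A * (1 - q * u) * (B * (1 - y * q * (u * x * x)))) =
    (1 + u * x * q) * (1 + y * (u * x)) / ((1 - y * (u * x * (u * x) * q)) * (1 - y * (u * x * (u * x) * q ^ 2))) *
        (w * v / (A * B)) +
      (w * v *
            (q * (u * x) * (1 + q * (u * x)) -
                q * (u * x) * (1 + y * (1 + q) * (u * x) + y * q ^ 2 * (u * x * (u * x))) * x +
              y * q ^ 2 * (u * x * (u * x)) * (1 + y * (u * x)) * x ^ 2) /
          (x * (A * (1 - q * u)) * (1 - y * (u * x * x * q)) *
              ((1 - y * (u * x * (u * x) * q)) * (1 - y * (u * x * (u * x) * q ^ 2))) *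
            B) -
        w * y * (v * x) *
            (q * (u * x) * (1 + q * (u * x)) -
                q * (u * x) * (1 + y * (1 + q) * (u * x) + y * q ^ 2 * (u * x * (u * x))) * (x * q) +
              y * q ^ 2 * (u * x * (u * x)) * (1 + y * (u * x)) * (x * q) ^ 2) /
          (x * q * A * (1 - y * (u * x * x * q ^ 2)) *
              ((1 - y * (u * x * (u * x) * q)) * (1 - y * (u * x * (u * x) * q ^ 2))) *
            (B * (1 - y * q * (u * x * x))))) := by
  have hd34 : (1 - y*(u*x*(u*x)*q)) * (1 - y*(u*x*(u*x)*q^2)) ≠ 0 := mul_ne_zero h3 h4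
  set Dall := x*q*A*B*(1-q*u)*(1-y*q*(u*x*x))*(1-y*(u*x*x*q))*(1-y*(u*x*x*q^2))*
      ((1-y*(u*x*(u*x)*q))*(1-y*(u*x*(u*x)*q^2))) with hDall
  have hD : Dall ≠ 0 :=
    mul_ne_zero (mul_ne_zero (mul_ne_zero (mul_ne_zero (mul_ne_zero (mul_ne_zero
      (mul_ne_zero (mul_ne_zero hx0 hq) ha) hb) h1) h2) h5) h6) hd34
  rw [div_mul_div_comm]
  have e0 : w * v / (A * (1 - q * u) * (B * (1 - y * q * (u * x * x)))) =
      (w*v*(x*q*(1-y*(u*x*x*q))*(1-y*(u*x*x*q^2))*((1-y*(u*x*(u*x)*q))*(1-y*(u*x*(u*x)*q^2))))) / Dall := by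
    rw [div_eq_div_iff (mul_ne_zero (mul_ne_zero ha h1) (mul_ne_zero hb h2)) hD, hDall]
    ring
  have e1 : (1 + u * x * q) * (1 + y * (u * x)) * (w * v) /
      ((1 - y * (u * x * (u * x) * q)) * (1 - y * (u * x * (u * x) * q ^ 2)) * (A * B)) =
      ((1+u*x*q)*(1+y*(u*x))*(w*v)*(x*q*(1-q*u)*(1-y*q*(u*x*x))*(1-y*(u*x*x*q))*(1-y*(u*x*x*q^2)))) / Dall := by
    rw [div_eq_div_iff (mul_ne_zero hd34 (mul_ne_zero ha hb)) hD, hDall]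
    ring
  have e2 : w * v *
            (q * (u * x) * (1 + q * (u * x)) -
                q * (u * x) * (1 + y * (1 + q) * (u * x) + y * q ^ 2 * (u * x * (u * x))) * x +
              y * q ^ 2 * (u * x * (u * x)) * (1 + y * (u * x)) * x ^ 2) /
          (x * (A * (1 - q * u)) * (1 - y * (u * x * x * q)) *
              ((1 - y * (u * x * (u * x) * q)) * (1 - y * (u * x * (u * x) * q ^ 2))) *
            B) =
      (w * v *
            (q * (u * x) * (1 + q * (u * x)) -
                q * (u * x) * (1 + y * (1 + q) * (u * x) + y * q ^ 2 * (u * x * (u * x))) * x +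
              y * q ^ 2 * (u * x * (u * x)) * (1 + y * (u * x)) * x ^ 2) *
        (q*(1-y*q*(u*x*x))*(1-y*(u*x*x*q^2)))) / Dall := by
    rw [div_eq_div_iff (mul_ne_zero (mul_ne_zero (mul_ne_zero (mul_ne_zero hx0
      (mul_ne_zero ha h1)) h5) hd34) hb) hD, hDall]
    ring
  have e3 : w * y * (v * x) *
            (q * (u * x) * (1 + q * (u * x)) -
                q * (u * x) * (1 + y * (1 + q) * (u * x) + y * q ^ 2 * (u * x * (u * x))) * (x * q) +
              y * q ^ 2 * (u * x * (u * x)) * (1 + y * (u * x)) * (x * q) ^ 2) /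
          (x * q * A * (1 - y * (u * x * x * q ^ 2)) *
              ((1 - y * (u * x * (u * x) * q)) * (1 - y * (u * x * (u * x) * q ^ 2))) *
            (B * (1 - y * q * (u * x * x)))) =
      (w * y * (v * x) *
            (q * (u * x) * (1 + q * (u * x)) -
                q * (u * x) * (1 + y * (1 + q) * (u * x) + y * q ^ 2 * (u * x * (u * x))) * (x * q) +
              y * q ^ 2 * (u * x * (u * x)) * (1 + y * (u * x)) * (x * q) ^ 2) *
        ((1-q*u)*(1-y*(u*x*x*q)))) / Dall := by
    rw [div_eq_div_iff (mul_ne_zero (mul_ne_zero (mul_ne_zero (mul_ne_zero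
      (mul_ne_zero hx0 hq) ha) h6) hd34) (mul_ne_zero hb h2)) hD, hDall]
    ring
  rw [e0, e1, e2, e3, div_sub_div_same, ← add_div]
  congr 1
  ring

noncomputable def Ncert (q y : ℂ) (n : ℕ) (x : ℂ) : ℂ :=
  q*q^n*(1+q*q^n) - q*q^n*(1+y*(1+q)*q^n+y*q^2*q^(2*n))*x + y*q^2*q^(2*n)*(1+y*q^n)*x^2

noncomputable def Gc (q y : ℂ) (n k : ℕ) : ℂ :=
  y^k * q^(k*(k-1)/2) * Ncert q y n (q^k) /
    (q^k * qPoch q q (n+1-k) * (1 - y*q^(n+k+1)) *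
      ((1 - y*q^(2*n+1)) * (1 - y*q^(2*n+2))) * qPoch (y*q) q (n+k))

lemma tel_lemma (q y : ℂ) (hq : q ≠ 0)
    (hqe : ∀ i : ℕ, 1 - q^(i+1) ≠ 0)
    (hyn : ∀ i : ℕ, 1 - y*q^i ≠ 0)
    (n k : ℕ) (hk : k ≤ n) :
    y^k*q^(k*(k-1)/2) / (qPoch q q (n+1-k) * qPoch (y*q) q (n+1+k)) =
      (1+q^(n+1))*(1+y*q^n)/((1-y*q^(2*n+1))*(1-y*q^(2*n+2))) *
        (y^k*q^(k*(k-1)/2) / (qPoch q q (n-k) * qPoch (y*q) q (n+k)))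
      + (Gc q y n k - Gc q y n (k+1)) := by
  have hq' : ∀ i, (1:ℂ) - q*q^i ≠ 0 := fun i => by
    have := hqe i; rwa [pow_succ'] at this
  have hyq' : ∀ i, (1:ℂ) - y*q*q^i ≠ 0 := fun i => by
    have := hyn (i+1); rw [pow_succ'] at this; rwa [← mul_assoc] at this
  have ha : qPoch q q (n-k) ≠ 0 :=
    Finset.prod_ne_zero_iff.mpr fun i _ => hq' i
  have hb : qPoch (y*q) q (n+k) ≠ 0 :=
    Finset.prod_ne_zero_iff.mpr fun i _ => hyq' i
  simp only [Gc, Ncert]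
  rw [show n+1-k = (n-k)+1 from by omega]
  rw [show n+1+k = (n+k)+1 from by omega]
  rw [show n+1-(k+1) = n-k from by omega]
  rw [show n+(k+1)+1 = n+k+2 from by omega]
  rw [show n+(k+1) = (n+k)+1 from by omega]
  simp only [qPoch_succ, Nat.add_sub_cancel, tri]
  simp only [show (2:ℕ)*n = n+n from two_mul n]
  simp only [pow_add, pow_one]
  rw [show q^n = q^(n-k)*q^k from by rw [← pow_add]; congr 1; omega]
  have hu0 : q^(n-k) ≠ 0 := pow_ne_zero _ hq
  have hx0 : q^k ≠ 0 := pow_ne_zero _ hq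
  have h1 : 1 - q*q^(n-k) ≠ 0 := hq' (n-k)
  have h2 : 1 - y * q * (q ^ (n - k) * q ^ k * q ^ k) ≠ 0 := by
    have h := hyn (n+k+1); intro hc; apply h
    rw [show n+k+1 = ((n-k)+k+k)+1 from by omega]; simp only [pow_add, pow_succ, pow_zero, one_mul]
    linear_combination hc
  have h3 : 1 - y * (q ^ (n - k) * q ^ k * (q ^ (n - k) * q ^ k) * q) ≠ 0 := by
    have h := hyn (2*n+1); intro hc; apply h
    rw [show 2*n+1 = ((n-k)+k+((n-k)+k))+1 from by omega]; simp only [pow_add, pow_succ, pow_zero, one_mul]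
    linear_combination hc
  have h4 : 1 - y * (q ^ (n - k) * q ^ k * (q ^ (n - k) * q ^ k) * q ^ 2) ≠ 0 := by
    have h := hyn (2*n+2); intro hc; apply h
    rw [show 2*n+2 = ((n-k)+k+((n-k)+k))+2 from by omega]; simp only [pow_add, pow_succ, pow_zero, one_mul]
    linear_combination hc
  have h5 : 1 - y * (q ^ (n - k) * q ^ k * q ^ k * q) ≠ 0 := by
    have h := hyn (n+k+1); intro hc; apply h
    rw [show n+k+1 = ((n-k)+k+k)+1 from by omega]; simp only [pow_add, pow_succ, pow_zero, one_mul]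
    linear_combination hc
  have h6 : 1 - y * (q ^ (n - k) * q ^ k * q ^ k * q ^ 2) ≠ 0 := by
    have h := hyn (n+k+2); intro hc; apply h
    rw [show n+k+2 = ((n-k)+k+k)+2 from by omega]; simp only [pow_add, pow_succ, pow_zero, one_mul]
    linear_combination hc
  set u := q^(n-k) with hu
  set x := q^k with hx
  set A := qPoch q q (n-k) with hA
  set B := qPoch (y*q) q (n+k) with hB
  set w := y^k with hw
  set v := q^(k*(k-1)/2) with hv
  clear_value u x A B w v
  exact abstract_tel q y u x A B w v hq hx0 ha hb h1 h2 h3 h4 h5 h6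

lemma L1_lemma (q y : ℂ) (hq : q ≠ 0)
    (hyq' : ∀ i, (1:ℂ) - y*q*q^i ≠ 0)
    (n : ℕ) :
    qPoch (-q) q (n+1) * qPoch (-y) q (n+1) / qPoch (y*q) q (2*(n+1)) =
      (1+q^(n+1))*(1+y*q^n)/((1-y*q^(2*n+1))*(1-y*q^(2*n+2))) *
        (qPoch (-q) q n * qPoch (-y) q n / qPoch (y*q) q (2*n)) := by
  have hB : qPoch (y*q) q (2*n) ≠ 0 :=
    Finset.prod_ne_zero_iff.mpr fun i _ => hyq' i
  rw [show 2*(n+1) = (2*n+1)+1 from by omega]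
  rw [qPoch_succ (y*q) q (2*n+1), show 2*n+1 = (2*n)+1 from rfl, qPoch_succ (y*q) q (2*n),
    qPoch_succ (-q) q n, qPoch_succ (-y) q n]
  rw [show q^(2*n+1+1) = q*(q*q^(2*n)) from by rw [pow_succ, pow_succ]; ring,
    show q^(2*n+1) = q*q^(2*n) from by rw [pow_succ]; ring,
    show q^(n+1) = q*q^n from by rw [pow_succ]; ring]
  have d1 : 1 - y*q*q^(2*n) ≠ 0 := hyq' (2*n)
  have d2 : 1 - y*q*(q*q^(2*n)) ≠ 0 := by
    have := hyq' (2*n+1); rwa [show q^(2*n+1) = q*q^(2*n) from by rw [pow_succ]; ring] at this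
  have d1' : 1 - y*(q*q^(2*n)) ≠ 0 := by
    intro hc; exact d1 (by linear_combination hc)
  have d2' : 1 - y*(q*(q*q^(2*n))) ≠ 0 := by
    intro hc; exact d2 (by linear_combination hc)
  rw [div_mul_div_comm, div_eq_div_iff
    (mul_ne_zero (mul_ne_zero hB d1) d2)
    (mul_ne_zero (mul_ne_zero d1' d2') hB)]
  ring

lemma B1_lemma (q y : ℂ) (hq : q ≠ 0)
    (hq' : ∀ i, (1:ℂ) - q*q^i ≠ 0)
    (hyn : ∀ i : ℕ, 1 - y*q^i ≠ 0)
    (hyq' : ∀ i, (1:ℂ) - y*q*q^i ≠ 0)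
    (hmq : ∀ i, (1:ℂ) - -q*q^i ≠ 0)
    (hmy : ∀ i, (1:ℂ) - -y*q^i ≠ 0)
    (n : ℕ) :
    qPoch (-q) q (n+1) * qPoch (-y) q (n+1) / qPoch (y*q) q (2*(n+1)) *
      (q^(2*(n+1)) * qPoch (y/q) q (2*(n+1)) /
        (qPoch (q^2) (q^2) (n+1) * qPoch (y^2) (q^2) (n+1))) = Gc q y n 0 := by
  have hA1 : qPoch q q (n+1) ≠ 0 := Finset.prod_ne_zero_iff.mpr fun i _ => hq' i
  have hBn : qPoch (y*q) q n ≠ 0 := Finset.prod_ne_zero_iff.mpr fun i _ => hyq' i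
  have hB2 : qPoch (y*q) q (2*n) ≠ 0 := Finset.prod_ne_zero_iff.mpr fun i _ => hyq' i
  have hE : qPoch (-q) q (n+1) ≠ 0 := Finset.prod_ne_zero_iff.mpr fun i _ => hmq i
  have hF : qPoch (-y) q (n+1) ≠ 0 := Finset.prod_ne_zero_iff.mpr fun i _ => hmy i
  have h1y : (1:ℂ) - y ≠ 0 := by
    have := hyn 0; rwa [pow_zero, mul_one] at this
  have hyn1 : 1 - y*(q*q^n) ≠ 0 := by
    have := hyn (n+1); rwa [show q^(n+1) = q*q^n from by rw [pow_succ]; ring] at this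
  simp only [Gc, Ncert, pow_zero, one_mul, mul_one, Nat.sub_zero, Nat.add_zero, Nat.zero_mul,
    Nat.zero_div]
  rw [show 2*(n+1) = (2*n)+2 from by omega]
  rw [qPoch_yq y q hq (2*n)]
  rw [show (2*n)+2 = (2*n+1)+1 from rfl, qPoch_succ (y*q) q (2*n+1),
    show 2*n+1 = (2*n)+1 from rfl, qPoch_succ (y*q) q (2*n)]
  rw [qPoch_sq q q (n+1), qPoch_sq y q (n+1), qPoch_y_succ y q n]
  rw [show q^(2*n+1+1) = q*(q*(q^n*q^n)) from by
        rw [pow_succ, pow_succ, show q^(2*n) = q^n*q^n from by rw [← pow_add]; congr 1; omega]; ring,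
    show q^(2*n+1) = q*(q^n*q^n) from by
        rw [pow_succ, show q^(2*n) = q^n*q^n from by rw [← pow_add]; congr 1; omega]; ring,
    show q^(2*n) = q^n*q^n from by rw [← pow_add]; congr 1; omega,
    show q^(n+1) = q*q^n from by rw [pow_succ]; ring]
  have d1b : 1 - y*q*(q^n*q^n) ≠ 0 := by
    intro hc; apply hyn (2*n+1)
    rw [show 2*n+1 = (n+n)+1 from by omega, pow_succ, pow_add]; linear_combination hc
  have d2b : 1 - y*q*(q*(q^n*q^n)) ≠ 0 := by
    intro hc; apply hyn (2*n+2)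
    rw [show 2*n+2 = ((n+n)+1)+1 from by omega, pow_succ, pow_succ, pow_add]; linear_combination hc
  have dd1 : 1 - y*(q*(q^n*q^n)) ≠ 0 := by
    intro hc; exact d1b (by linear_combination hc)
  have dd2 : 1 - y*(q*(q*(q^n*q^n))) ≠ 0 := by
    intro hc; exact d2b (by linear_combination hc)
  rw [div_mul_div_comm]
  rw [show q * (q * (q ^ n * q ^ n)) * ((1 - y / q) * ((1 - y) * qPoch (y * q) q (2 * n))) =
      q * (q ^ n * q ^ n) * ((q - y) * ((1 - y) * qPoch (y * q) q (2 * n))) from by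
    field_simp]
  rw [div_eq_div_iff
    (mul_ne_zero (mul_ne_zero (mul_ne_zero hB2 d1b) d2b)
      (mul_ne_zero (mul_ne_zero hA1 hE) (mul_ne_zero (mul_ne_zero h1y hBn) hF)))
    (mul_ne_zero (mul_ne_zero (mul_ne_zero hA1 hyn1) (mul_ne_zero dd1 dd2)) hBn)]
  ring

lemma B2_lemma (q y : ℂ) (hq : q ≠ 0)
    (hyq' : ∀ i, (1:ℂ) - y*q*q^i ≠ 0)
    (n : ℕ) :
    Gc q y n (n+1) =
      y^(n+1) * q^((n+1)*(n+1-1)/2) /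
        (qPoch q q (n+1-(n+1)) * qPoch (y*q) q (n+1+(n+1))) := by
  have hB2 : qPoch (y*q) q (2*n) ≠ 0 := Finset.prod_ne_zero_iff.mpr fun i _ => hyq' i
  have d1 : 1 - y*q*q^(2*n) ≠ 0 := hyq' (2*n)
  have d2 : 1 - y*q*(q*q^(2*n)) ≠ 0 := by
    have := hyq' (2*n+1); rwa [show q^(2*n+1) = q*q^(2*n) from by rw [pow_succ]; ring] at this
  simp only [Gc, Ncert]
  rw [show n+1-(n+1) = 0 from by omega, show n+1+(n+1) = (2*n+1)+1 from by omega,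
    show n+(n+1)+1 = 2*n+2 from by omega, show n+(n+1) = (2*n)+1 from by omega]
  rw [qPoch_succ (y*q) q (2*n+1), show 2*n+1 = (2*n)+1 from rfl, qPoch_succ (y*q) q (2*n)]
  simp only [qPoch_zero]
  rw [show q^(2*n+2) = q*(q*(q^n*q^n)) from by
        rw [show 2*n+2 = ((n+n)+1)+1 from by omega, pow_succ, pow_succ, pow_add]; ring,
    show q^(2*n+1) = q*(q^n*q^n) from by
        rw [show 2*n+1 = (n+n)+1 from by omega, pow_succ, pow_add]; ring,
    show q^(2*n) = q^n*q^n from by rw [← pow_add]; congr 1; omega,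
    show q^(n+1) = q*q^n from by rw [pow_succ]; ring]
  have d1b : 1 - y*q*(q^n*q^n) ≠ 0 := by
    intro hc; exact d1 (by rw [show 2*n = n+n from by omega, pow_add]; linear_combination hc)
  have d2b : 1 - y*q*(q*(q^n*q^n)) ≠ 0 := by
    intro hc; exact d2 (by rw [show 2*n = n+n from by omega, pow_add]; linear_combination hc)
  have dd1 : 1 - y*(q*(q^n*q^n)) ≠ 0 := fun hc => d1b (by linear_combination hc)
  have dd2 : 1 - y*(q*(q*(q^n*q^n))) ≠ 0 := fun hc => d2b (by linear_combination hc)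
  rw [div_eq_div_iff
    (mul_ne_zero (mul_ne_zero (mul_ne_zero
        (mul_ne_zero (mul_ne_zero hq (pow_ne_zero _ hq)) one_ne_zero) dd2)
      (mul_ne_zero dd1 dd2)) (mul_ne_zero hB2 d1b))
    (mul_ne_zero one_ne_zero (mul_ne_zero (mul_ne_zero hB2 d1b) d2b))]
  ring

theorem stmt_9 (q y : ℂ) (hq0 : 0 < ‖q‖) (hq1 : ‖q‖ < 1)
    (hy : ∀ m : ℕ, y ≠ q ^ (-(m : ℤ)) ∧ y ≠ -q ^ (-(m : ℤ))) (n : ℕ) :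
    (qPoch (-q) q n * qPoch (-y) q n / qPoch (y * q) q (2 * n)) *
      ∑ k ∈ Finset.range (n + 1),
        q ^ (2 * k) * qPoch (y / q) q (2 * k) /
          (qPoch (q ^ 2) (q ^ 2) k * qPoch (y ^ 2) (q ^ 2) k) =
    ∑ k ∈ Finset.range (n + 1),
      y ^ k * q ^ (k * (k - 1) / 2) / (qPoch q q (n - k) * qPoch (y * q) q (n + k)) := by
  have hq : q ≠ 0 := by
    intro h; rw [h] at hq0; simp at hq0
  have hqe : ∀ i : ℕ, 1 - q^(i+1) ≠ 0 := one_sub_pow_ne hq1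
  have hq' : ∀ i, (1:ℂ) - q*q^i ≠ 0 := fun i => by
    have := hqe i; rwa [pow_succ'] at this
  have hyn : ∀ i : ℕ, 1 - y*q^i ≠ 0 := one_sub_y_ne hq hy
  have hyp : ∀ i : ℕ, 1 + y*q^i ≠ 0 := one_add_y_ne hq hy
  have hyq' : ∀ i, (1:ℂ) - y*q*q^i ≠ 0 := fun i => by
    have := hyn (i+1); rw [pow_succ'] at this; rwa [← mul_assoc] at this
  have hmq : ∀ i, (1:ℂ) - -q*q^i ≠ 0 := fun i => by
    have h := one_add_pow_ne hq1 i
    rw [pow_succ'] at h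
    intro hc; exact h (by linear_combination hc)
  have hmy : ∀ i, (1:ℂ) - -y*q^i ≠ 0 := fun i => by
    have h := hyp i
    intro hc; exact h (by linear_combination hc)
  induction n with
  | zero => norm_num [qPoch_zero]
  | succ n IH =>
    rw [Finset.sum_range_succ (fun k => q ^ (2 * k) * qPoch (y / q) q (2 * k) /
          (qPoch (q ^ 2) (q ^ 2) k * qPoch (y ^ 2) (q ^ 2) k)) (n+1),
      Finset.sum_range_succ (fun k => y ^ k * q ^ (k * (k - 1) / 2) /
          (qPoch q q (n + 1 - k) * qPoch (y * q) q (n + 1 + k))) (n+1)]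
    have htel : ∀ k ∈ Finset.range (n+1),
        y ^ k * q ^ (k * (k - 1) / 2) / (qPoch q q (n + 1 - k) * qPoch (y * q) q (n + 1 + k)) =
        (1+q^(n+1))*(1+y*q^n)/((1-y*q^(2*n+1))*(1-y*q^(2*n+2))) *
          (y^k*q^(k*(k-1)/2) / (qPoch q q (n-k) * qPoch (y*q) q (n+k)))
        + (Gc q y n k - Gc q y n (k+1)) := fun k hk =>
      tel_lemma q y hq hqe hyn n k (Nat.lt_succ_iff.mp (Finset.mem_range.mp hk))
    rw [Finset.sum_congr rfl htel, Finset.sum_add_distrib, Finset.sum_range_sub'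
      (fun k => Gc q y n k), ← Finset.mul_sum]
    have hL1 := L1_lemma q y hq hyq' n
    have hB1 := B1_lemma q y hq hq' hyn hyq' hmq hmy n
    have hB2 := B2_lemma q y hq hyq' n
    linear_combination (∑ k ∈ Finset.range (n + 1),
        q ^ (2 * k) * qPoch (y / q) q (2 * k) /
          (qPoch (q ^ 2) (q ^ 2) k * qPoch (y ^ 2) (q ^ 2) k)) * hL1
      + ((1+q^(n+1))*(1+y*q^n)/((1-y*q^(2*n+1))*(1-y*q^(2*n+2)))) * IH + hB1 + hB2
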